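/- Suppose the action set 𝒜 is finite, Y = f(A, X) + ε with f bounded measurable and ε bounded, ε is conditionally independent of A given (X, U), and P(A = a | U, X) > 0 almost surely for each a ∈ 𝒜. Let m : 𝒰 × 𝒳 × 𝒜 → ℝ be any measurable function with m(U, X, A) = E[Y | U, X, A] almost surely. Then for every a ∈ 𝒜, E[m(U, X, a) | X] = f(a, X) + E[ε | X] almost surely; that is, the do-intervention mean E[E[Y | U, X, A = a] | X = x] equals the CATE g*(x, a) = f(a, x) + E[ε | X = x]. -/

import Mathlib

open MeasureTheory ProbabilityTheory MeasurableSpace Set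

/-- The do-intervention mean equals the CATE under structured rewards.
If `Y = f (A, X) + ε`, `ε ⫫ A | (X, U)`, and overlap holds, then for any measurable version
`m` of `E[Y | U, X, A]` and every action `a`,
`E[m (U, X, a) | X] = f (a, X) + E[ε | X]` almost surely. -/
theorem do_intervention_mean_eq_cate
    {Ω : Type*} [mΩ : MeasurableSpace Ω] [StandardBorelSpace Ω] [Nonempty Ω]
    {𝒰 𝒳 𝒜 : Type*} [MeasurableSpace 𝒰] [MeasurableSpace 𝒳]
    [Fintype 𝒜] [MeasurableSpace 𝒜] [MeasurableSingletonClass 𝒜]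
    (μ : Measure Ω) [IsProbabilityMeasure μ]
    (U : Ω → 𝒰) (X : Ω → 𝒳) (A : Ω → 𝒜) (Y : Ω → ℝ) (ε : Ω → ℝ)
    (hU : Measurable U) (hX : Measurable X) (hA : Measurable A) (hY : Measurable Y)
    (hε : Measurable ε)
    -- structured reward : Y = f (A, X) + ε with f bounded measurable and ε bounded
    (f : 𝒜 × 𝒳 → ℝ) (hf : Measurable f) (Cf : ℝ) (hfbdd : ∀ p, |f p| ≤ Cf)
    (Cε : ℝ) (hεbdd : ∀ ω, |ε ω| ≤ Cε)
    (hreward : ∀ ω, Y ω = f (A ω, X ω) + ε ω)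
    -- ε ⫫ A | (X, U)
    (hεA : CondIndepFun (MeasurableSpace.comap (fun ω => (X ω, U ω)) inferInstance)
      ((hX.prodMk hU).comap_le) ε A μ)
    -- overlap : P(A = a | U, X) > 0 almost surely, for every a
    (hoverlap : ∀ a : 𝒜, ∀ᵐ ω ∂μ,
      0 < (μ[({ω' | A ω' = a}).indicator (fun _ => (1 : ℝ)) |
        MeasurableSpace.comap (fun ω => (U ω, X ω)) inferInstance]) ω)
    -- m : measurable version of E[Y | U, X, A]
    (m : 𝒰 × 𝒳 × 𝒜 → ℝ) (hm : Measurable m)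
    (hmver : (fun ω => m (U ω, X ω, A ω)) =ᵐ[μ]
      μ[Y | MeasurableSpace.comap (fun ω => (U ω, X ω, A ω)) inferInstance]) :
    ∀ a : 𝒜,
      μ[(fun ω => m (U ω, X ω, a)) | MeasurableSpace.comap X inferInstance]
        =ᵐ[μ]
      (fun ω => f (a, X ω) + (μ[ε | MeasurableSpace.comap X inferInstance]) ω) := by
  intro a
  -- abbreviations
  set W : Ω → 𝒳 × 𝒰 := fun ω => (X ω, U ω) with hWdef
  have hWm : Measurable W := hX.prodMk hU
  have hm2 : MeasurableSpace.comap W inferInstance ≤ mΩ := hWm.comap_le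
  set F : Ω → 𝒰 × 𝒳 × 𝒜 := fun ω => (U ω, X ω, A ω) with hFdef
  have hFm : Measurable F := hU.prodMk (hX.prodMk hA)
  have hm3 : MeasurableSpace.comap F inferInstance ≤ mΩ := hFm.comap_le
  have hmX : MeasurableSpace.comap X inferInstance ≤ mΩ := hX.comap_le
  have hm23 : MeasurableSpace.comap W inferInstance ≤ MeasurableSpace.comap F inferInstance := by
    have h : W = (fun p : 𝒰 × 𝒳 × 𝒜 => (p.2.1, p.1)) ∘ F := rfl
    rw [h, ← MeasurableSpace.comap_comp]
    exact MeasurableSpace.comap_mono ((measurable_snd.fst.prodMk measurable_fst).comap_le)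
  have hmX2 : MeasurableSpace.comap X inferInstance ≤ MeasurableSpace.comap W inferInstance := by
    have h : X = (fun p : 𝒳 × 𝒰 => p.1) ∘ W := rfl
    rw [h, ← MeasurableSpace.comap_comp]
    exact MeasurableSpace.comap_mono (measurable_fst.comap_le)
  -- the two orderings of the pair generate the same σ-algebra
  have heq : MeasurableSpace.comap (fun ω => (U ω, X ω)) inferInstance
      = MeasurableSpace.comap W inferInstance := by
    apply le_antisymm
    · have h : (fun ω => (U ω, X ω)) = (Prod.swap : 𝒳 × 𝒰 → 𝒰 × 𝒳) ∘ W := rfl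
      rw [h, ← MeasurableSpace.comap_comp]
      exact MeasurableSpace.comap_mono (measurable_swap.comap_le)
    · have h : W = (Prod.swap : 𝒰 × 𝒳 → 𝒳 × 𝒰) ∘ (fun ω => (U ω, X ω)) := rfl
      rw [h, ← MeasurableSpace.comap_comp]
      exact MeasurableSpace.comap_mono (measurable_swap.comap_le)
  -- the indicator functions of the actions
  set ind : 𝒜 → Ω → ℝ := fun b => (A ⁻¹' {b}).indicator (fun _ => (1 : ℝ)) with hinddef
  have hindm : ∀ b, Measurable (ind b) := fun b =>
    measurable_const.indicator (hA (measurableSet_singleton b))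
  have hindbdd : ∀ b ω, |ind b ω| ≤ 1 := by
    intro b ω
    by_cases h : ω ∈ A ⁻¹' {b} <;> simp [hinddef, Set.indicator_apply, h]
  have hintind : ∀ b, Integrable (ind b) μ := fun b =>
    (Integrable.mono' (integrable_const (1 : ℝ)) (hindm b).aestronglyMeasurable
      (Filter.Eventually.of_forall fun ω => by
        simpa using hindbdd b ω))
  -- basic integrability
  have intε : Integrable ε μ :=
    Integrable.mono' (integrable_const Cε) hε.aestronglyMeasurable
      (Filter.Eventually.of_forall fun ω => by simpa using hεbdd ω)
  have intY : Integrable Y μ := by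
    refine Integrable.mono' (integrable_const (Cf + Cε)) hY.aestronglyMeasurable
      (Filter.Eventually.of_forall fun ω => ?_)
    rw [hreward ω, Real.norm_eq_abs]
    exact (abs_add_le _ _).trans (add_le_add (hfbdd _) (hεbdd _))
  have intfAX : Integrable (fun ω => f (A ω, X ω)) μ :=
    Integrable.mono' (integrable_const Cf)
      ((hf.comp (hA.prodMk hX)).aestronglyMeasurable)
      (Filter.Eventually.of_forall fun ω => by simpa using hfbdd (A ω, X ω))
  set η : Ω → ℝ := μ[ε | MeasurableSpace.comap W inferInstance] with hηdef
  have intη : Integrable η μ := integrable_condExp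
  have intprod : ∀ b, Integrable (fun ω => ε ω * ind b ω) μ := by
    intro b
    refine Integrable.mono' (intε.abs) (hε.mul (hindm b)).aestronglyMeasurable
      (Filter.Eventually.of_forall fun ω => ?_)
    rw [Real.norm_eq_abs, abs_mul]
    calc |ε ω| * |ind b ω| ≤ |ε ω| * 1 :=
          mul_le_mul_of_nonneg_left (hindbdd b ω) (abs_nonneg _)
      _ = |ε ω| := mul_one _
  set κ := condExpKernel μ (MeasurableSpace.comap W inferInstance) with hκdef
  -- the kernel product rule on a countable generating family
  have hKer : ∀ᵐ ω ∂μ, ∀ (q : ℚ) (b : 𝒜),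
      κ ω (ε ⁻¹' Iic (q : ℝ) ∩ A ⁻¹' {b}) = κ ω (ε ⁻¹' Iic (q : ℝ)) * κ ω (A ⁻¹' {b}) := by
    rw [ae_all_iff]
    intro q
    rw [ae_all_iff]
    intro b
    exact ae_of_ae_trim _
      (Kernel.indepFun_iff_measure_inter_preimage_eq_mul.mp hεA (Iic (q : ℝ)) ({b} : Set 𝒜)
        measurableSet_Iic (measurableSet_singleton b))
  -- a.e. independence of ε and A under the conditional kernel
  have hIndep : ∀ᵐ ω ∂μ, IndepFun ε A (κ ω) := by
    filter_upwards [hKer] with ω hω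
    set p1 : Set (Set Ω) := Set.range (fun q : ℚ => ε ⁻¹' Iic (q : ℝ)) with hp1def
    set p2 : Set (Set Ω) := Set.range (fun b : 𝒜 => A ⁻¹' {b}) with hp2def
    have hp1m : ∀ s ∈ p1, MeasurableSet s := by
      rintro s ⟨q, rfl⟩; exact hε measurableSet_Iic
    have hp2m : ∀ s ∈ p2, MeasurableSet s := by
      rintro s ⟨b, rfl⟩; exact hA (measurableSet_singleton b)
    have hPS1 : IsPiSystem p1 := by
      rintro s ⟨q, rfl⟩ s' ⟨q', rfl⟩ _
      refine ⟨min q q', ?_⟩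
      simp only
      rw [← Set.preimage_inter, Iic_inter_Iic]
      push_cast
      rfl
    have hPS2 : IsPiSystem p2 := by
      rintro s ⟨b, rfl⟩ s' ⟨b', rfl⟩ hne
      rcases eq_or_ne b b' with rfl | hbb'
      · exact ⟨b, by simp⟩
      · exfalso
        apply hne.ne_empty
        ext ω'
        simp only [Set.mem_inter_iff, Set.mem_preimage, Set.mem_singleton_iff,
          Set.mem_empty_iff_false, iff_false, not_and]
        rintro rfl
        exact hbb'
    have hsets : IndepSets p1 p2 (κ ω) := by
      rw [IndepSets_iff]
      rintro t1 t2 ⟨q, rfl⟩ ⟨b, rfl⟩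
      exact hω q b
    have hgen1 : MeasurableSpace.comap ε inferInstance = MeasurableSpace.generateFrom p1 := by
      have hborel : (inferInstance : MeasurableSpace ℝ)
          = MeasurableSpace.generateFrom (⋃ q : ℚ, {Iic (q : ℝ)}) := by
        rw [BorelSpace.measurable_eq (α := ℝ)]
        exact Real.borel_eq_generateFrom_Iic_rat
      rw [hborel, MeasurableSpace.comap_generateFrom]
      congr 1
      rw [Set.iUnion_singleton_eq_range, ← Set.range_comp]
      rfl
    have hgen2 : MeasurableSpace.comap A inferInstance ≤ MeasurableSpace.generateFrom p2 := by
      have h𝒜 : (inferInstance : MeasurableSpace 𝒜) ≤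
          MeasurableSpace.generateFrom (Set.range fun b : 𝒜 => ({b} : Set 𝒜)) := by
        intro s _
        have hs : s = ⋃ b ∈ s, {b} := (Set.biUnion_of_singleton s).symm
        rw [hs]
        exact MeasurableSet.biUnion s.to_countable
          (fun b _ => MeasurableSpace.measurableSet_generateFrom ⟨b, rfl⟩)
      calc MeasurableSpace.comap A inferInstance
          ≤ MeasurableSpace.comap A
            (MeasurableSpace.generateFrom (Set.range fun b : 𝒜 => ({b} : Set 𝒜))) :=
            MeasurableSpace.comap_mono h𝒜
        _ = MeasurableSpace.generateFrom p2 := by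
            rw [MeasurableSpace.comap_generateFrom]
            congr 1
            rw [← Set.range_comp]
            rfl
    have hi : Indep (MeasurableSpace.generateFrom p1) (MeasurableSpace.generateFrom p2) (κ ω) :=
      IndepSets.indep' hp1m hp2m hPS1 hPS2 hsets
    rw [IndepFun_iff_Indep]
    exact indep_of_indep_of_le_right (indep_of_indep_of_le_left hi hgen1.le) hgen2
  -- the conditional-expectation product rule for ε and the action indicators
  have hK : ∀ b : 𝒜, μ[(fun ω => ε ω * ind b ω) | MeasurableSpace.comap W inferInstance]
      =ᵐ[μ] fun ω => η ω * (μ[ind b | MeasurableSpace.comap W inferInstance]) ω := by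
    intro b
    have hind_eq : ind b = fun ω => ({b} : Set 𝒜).indicator (fun _ => (1 : ℝ)) (A ω) := by
      funext ω
      by_cases h : A ω = b <;> simp [hinddef, Set.indicator_apply, h]
    have h1 := condExp_ae_eq_integral_condExpKernel hm2 (intprod b)
    have h2 := condExp_ae_eq_integral_condExpKernel hm2 intε
    have h3 := condExpKernel_ae_eq_condExp (μ := μ) hm2 (hA (measurableSet_singleton b))
    filter_upwards [h1, h2, h3, hIndep] with ω hω1 hω2 hω3 hω5
    have hcomp : IndepFun ε (fun x => ({b} : Set 𝒜).indicator (fun _ => (1 : ℝ)) (A x)) (κ ω) :=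
      hω5.comp measurable_id (measurable_const.indicator (measurableSet_singleton b))
    have hmul := IndepFun.integral_mul_eq_mul_integral hcomp hε.aestronglyMeasurable
      (measurable_const.indicator (hA (measurableSet_singleton b))).aestronglyMeasurable
    have hι : ∫ y, ind b y ∂(κ ω) = (κ ω (A ⁻¹' {b})).toReal := by
      rw [hinddef]
      simp only
      rw [integral_indicator_const (1 : ℝ) (hA (measurableSet_singleton b))]
      simp [measureReal_def]
    calc (μ[(fun ω' => ε ω' * ind b ω') | MeasurableSpace.comap W inferInstance]) ω = ∫ y, ε y * ind b y ∂(κ ω) := hω1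
      _ = ∫ y, ε y * ({b} : Set 𝒜).indicator (fun _ => (1 : ℝ)) (A y) ∂(κ ω) := by
          rw [hind_eq]
      _ = (∫ y, ε y ∂(κ ω)) * ∫ y, ({b} : Set 𝒜).indicator (fun _ => (1 : ℝ)) (A y) ∂(κ ω) :=
          hmul
      _ = (∫ y, ε y ∂(κ ω)) * ∫ y, ind b y ∂(κ ω) := by rw [← hind_eq]
      _ = η ω * (μ[ind b | MeasurableSpace.comap W inferInstance]) ω := by rw [← hω2, hι, ← measureReal_def, hω3]
  -- E[Y | U, X, A] = f (A, X) + E[ε | X, U]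
  have hL : (fun ω => f (A ω, X ω) + η ω) =ᵐ[μ] μ[Y | MeasurableSpace.comap F inferInstance] := by
    refine ae_eq_condExp_of_forall_setIntegral_eq hm3 intY
      (fun s _ _ => (intfAX.add intη).integrableOn) (fun s hs _ => ?_) ?_
    · obtain ⟨B, hB, rfl⟩ := hs
      set T : 𝒜 → Set Ω := fun b => W ⁻¹' {p : 𝒳 × 𝒰 | (p.2, p.1, b) ∈ B} with hTdef
      have hTm : ∀ b, MeasurableSet[MeasurableSpace.comap W inferInstance] (T b) := by
        intro b
        exact ⟨{p : 𝒳 × 𝒰 | (p.2, p.1, b) ∈ B},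
          (measurable_snd.prodMk (measurable_fst.prodMk measurable_const)) hB, rfl⟩
      have hST : ∀ b, (F ⁻¹' B) ∩ A ⁻¹' {b} = T b ∩ A ⁻¹' {b} := by
        intro b
        ext ω
        simp only [Set.mem_inter_iff, Set.mem_preimage, Set.mem_singleton_iff, hTdef,
          Set.mem_setOf_eq, hFdef, hWdef]
        constructor
        · rintro ⟨h1, h2⟩; rw [h2] at h1; exact ⟨h1, h2⟩
        · rintro ⟨h1, h2⟩; rw [h2]; exact ⟨h1, rfl⟩
      have main : ∀ g : Ω → ℝ, Integrable g μ → AEStronglyMeasurable g μ →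
          (∀ b, μ[(fun ω => g ω * ind b ω) | MeasurableSpace.comap W inferInstance] =ᵐ[μ]
            fun ω => η ω * (μ[ind b | MeasurableSpace.comap W inferInstance]) ω) →
          ∫ x in F ⁻¹' B, g x ∂μ
            = ∑ b : 𝒜, ∫ x in T b,
                (η x * (μ[ind b | MeasurableSpace.comap W inferInstance]) x) ∂μ := by
        intro g hgi hgm hgK
        have hgind : ∀ b, Integrable (fun ω => g ω * ind b ω) μ := by
          intro b
          refine Integrable.mono' hgi.abs (hgm.mul (hindm b).aestronglyMeasurable)
            (Filter.Eventually.of_forall fun ω => ?_)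
          rw [Real.norm_eq_abs, abs_mul]
          calc |g ω| * |ind b ω| ≤ |g ω| * 1 :=
                mul_le_mul_of_nonneg_left (hindbdd b ω) (abs_nonneg _)
            _ = |g ω| := mul_one _
        have hsum : ∀ x, g x = ∑ b : 𝒜, g x * ind b x := by
          intro x
          rw [← Finset.mul_sum]
          have h1 : ∑ b : 𝒜, ind b x = 1 := by
            rw [Finset.sum_eq_single (A x)]
            · simp [hinddef, Set.indicator_apply]
            · intro b _ hb
              have hne : ¬ A x = b := fun h => hb h.symm
              simp [hinddef, Set.indicator_apply, hne]
            · intro h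
              exact absurd (Finset.mem_univ _) h
          rw [h1, mul_one]
        calc ∫ x in F ⁻¹' B, g x ∂μ
            = ∫ x in F ⁻¹' B, (∑ b : 𝒜, g x * ind b x) ∂μ :=
              integral_congr_ae (Filter.Eventually.of_forall fun x => hsum x)
          _ = ∑ b : 𝒜, ∫ x in F ⁻¹' B, g x * ind b x ∂μ :=
              integral_finset_sum _ (fun b _ => (hgind b).integrableOn)
          _ = ∑ b : 𝒜, ∫ x in T b, g x * ind b x ∂μ := by
              refine Finset.sum_congr rfl fun b _ => ?_
              have hgind_eq : (fun x => g x * ind b x) = (A ⁻¹' {b}).indicator g := by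
                funext x
                by_cases h : x ∈ A ⁻¹' {b} <;> simp [hinddef, Set.indicator_apply, h]
              rw [hgind_eq, setIntegral_indicator (hA (measurableSet_singleton b)),
                setIntegral_indicator (hA (measurableSet_singleton b)), hST b]
          _ = ∑ b : 𝒜, ∫ x in T b,
                (μ[(fun ω => g ω * ind b ω) | MeasurableSpace.comap W inferInstance]) x ∂μ := by
              refine Finset.sum_congr rfl fun b _ => ?_
              rw [setIntegral_condExp hm2 (hgind b) (hTm b)]
          _ = ∑ b : 𝒜, ∫ x in T b,
                (η x * (μ[ind b | MeasurableSpace.comap W inferInstance]) x) ∂μ := by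
              refine Finset.sum_congr rfl fun b _ => ?_
              refine setIntegral_congr_ae (hm2 _ (hTm b)) ?_
              filter_upwards [hgK b] with x hx _ using hx
      have hεside := main ε intε hε.aestronglyMeasurable hK
      have hηK : ∀ b, μ[(fun ω => η ω * ind b ω) | MeasurableSpace.comap W inferInstance] =ᵐ[μ]
          fun ω => η ω * (μ[ind b | MeasurableSpace.comap W inferInstance]) ω := by
        intro b
        have hη2 : Integrable (fun ω => η ω * ind b ω) μ := by
          refine Integrable.mono' intη.abs
            ((stronglyMeasurable_condExp.mono hm2).aestronglyMeasurable.mul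
              (hindm b).aestronglyMeasurable)
            (Filter.Eventually.of_forall fun ω => ?_)
          rw [Real.norm_eq_abs, abs_mul]
          calc |η ω| * |ind b ω| ≤ |η ω| * 1 :=
                mul_le_mul_of_nonneg_left (hindbdd b ω) (abs_nonneg _)
            _ = |η ω| := mul_one _
        exact condExp_mul_of_stronglyMeasurable_left stronglyMeasurable_condExp hη2 (hintind b)
      have hηside := main η intη
        (stronglyMeasurable_condExp.mono hm2).aestronglyMeasurable hηK
      have hYr : ∫ x in F ⁻¹' B, Y x ∂μ
          = ∫ x in F ⁻¹' B, f (A x, X x) ∂μ + ∫ x in F ⁻¹' B, ε x ∂μ := by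
        rw [← integral_add intfAX.integrableOn intε.integrableOn]
        exact integral_congr_ae (Filter.Eventually.of_forall fun x => hreward x)
      have hLr : ∫ x in F ⁻¹' B, (f (A x, X x) + η x) ∂μ
          = ∫ x in F ⁻¹' B, f (A x, X x) ∂μ + ∫ x in F ⁻¹' B, η x ∂μ :=
        integral_add intfAX.integrableOn intη.integrableOn
      rw [hLr, hYr, hεside, hηside]
    · refine AEStronglyMeasurable.add ?_ ?_
      · refine StronglyMeasurable.aestronglyMeasurable ?_
        have hmeas : Measurable[MeasurableSpace.comap F inferInstance]
            (fun ω => f (A ω, X ω)) := by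
          have h : (fun ω => f (A ω, X ω)) = (fun p : 𝒰 × 𝒳 × 𝒜 => f (p.2.2, p.2.1)) ∘ F := rfl
          rw [h]
          exact (hf.comp (measurable_snd.snd.prodMk measurable_snd.fst)).comp
            (comap_measurable F)
        exact hmeas.stronglyMeasurable
      · exact (stronglyMeasurable_condExp.mono hm23).aestronglyMeasurable
  have hMm : (fun ω => m (U ω, X ω, A ω)) =ᵐ[μ] fun ω => f (A ω, X ω) + η ω :=
    hmver.trans hL.symm
  -- transfer from A to the fixed action a, using overlap
  have hov : ∀ᵐ ω ∂μ, 0 < (μ[ind a | MeasurableSpace.comap W inferInstance]) ω := by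
    have h := hoverlap a
    rw [heq] at h
    exact h
  have hga : Measurable[MeasurableSpace.comap W inferInstance]
      (fun ω => m (U ω, X ω, a) - f (a, X ω)) := by
    have h : (fun ω => m (U ω, X ω, a) - f (a, X ω))
        = (fun p : 𝒳 × 𝒰 => m (p.2, p.1, a) - f (a, p.1)) ∘ W := rfl
    rw [h]
    exact ((hm.comp (measurable_snd.prodMk (measurable_fst.prodMk measurable_const))).sub
      (hf.comp (measurable_const.prodMk measurable_fst))).comp
      (comap_measurable W)
  have hηm2 : Measurable[MeasurableSpace.comap W inferInstance] η :=
    stronglyMeasurable_condExp.measurable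
  set N : Set Ω := {ω | ¬ (m (U ω, X ω, a) - f (a, X ω) = η ω)} with hNdef
  have hNm : MeasurableSet[MeasurableSpace.comap W inferInstance] N :=
    (measurableSet_eq_fun hga hηm2).compl
  have hnull : μ (N ∩ A ⁻¹' {a}) = 0 := by
    refine measure_mono_null ?_ (ae_iff.mp hMm)
    rintro ω ⟨h1, h2⟩
    have hAa : A ω = a := h2
    intro h
    have h' : m (U ω, X ω, A ω) = f (A ω, X ω) + η ω := h
    rw [hAa] at h'
    exact h1 (by linarith [h'])
  have hPaN : ∫ x in N, (μ[ind a | MeasurableSpace.comap W inferInstance]) x ∂μ = 0 := by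
    rw [setIntegral_condExp hm2 (hintind a) hNm]
    show ∫ x in N, (A ⁻¹' {a}).indicator (fun _ => (1 : ℝ)) x ∂μ = 0
    rw [setIntegral_indicator (hA (measurableSet_singleton a)), setIntegral_const, measureReal_def, hnull]
    simp
  have hmuN : μ N = 0 := by
    have hPa0 : (fun ω => (μ[ind a | MeasurableSpace.comap W inferInstance]) ω)
        =ᵐ[μ.restrict N] 0 := by
      refine (integral_eq_zero_iff_of_nonneg_ae ?_ integrable_condExp.integrableOn).mp hPaN
      refine ae_restrict_of_ae (condExp_nonneg ?_)
      exact Filter.Eventually.of_forall fun ω =>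
        Set.indicator_nonneg (fun _ _ => zero_le_one) ω
    have hpos : ∀ᵐ ω ∂μ.restrict N,
        0 < (μ[ind a | MeasurableSpace.comap W inferInstance]) ω :=
      ae_restrict_of_ae hov
    have hfalse : ∀ᵐ ω ∂μ.restrict N, False := by
      filter_upwards [hPa0, hpos] with ω hω1 hω2
      exact absurd hω1 (ne_of_gt hω2)
    have h0 : μ.restrict N = 0 :=
      ae_eq_bot.mp (Filter.eventually_false_iff_eq_bot.mp hfalse)
    rw [← Measure.restrict_apply_univ, h0]
    simp
  have hfin : (fun ω => m (U ω, X ω, a)) =ᵐ[μ] fun ω => f (a, X ω) + η ω := by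
    have hae : ∀ᵐ ω ∂μ, m (U ω, X ω, a) - f (a, X ω) = η ω := by
      rw [ae_iff]
      exact hmuN
    filter_upwards [hae] with ω h
    linarith [h]
  have intf2 : Integrable (fun ω => f (a, X ω)) μ :=
    Integrable.mono' (integrable_const Cf)
      ((hf.comp (measurable_const.prodMk hX)).aestronglyMeasurable)
      (Filter.Eventually.of_forall fun ω => by simpa using hfbdd (a, X ω))
  have smf : StronglyMeasurable[MeasurableSpace.comap X inferInstance]
      (fun ω => f (a, X ω)) := by
    have h : (fun ω => f (a, X ω)) = (fun x : 𝒳 => f (a, x)) ∘ X := rfl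
    rw [h]
    exact ((hf.comp measurable_prodMk_left).comp
      (comap_measurable X)).stronglyMeasurable
  have h1 : μ[(fun ω => m (U ω, X ω, a)) | MeasurableSpace.comap X inferInstance]
      =ᵐ[μ] μ[(fun ω => f (a, X ω) + η ω) | MeasurableSpace.comap X inferInstance] :=
    condExp_congr_ae hfin
  have h2 : μ[(fun ω => f (a, X ω) + η ω) | MeasurableSpace.comap X inferInstance]
      =ᵐ[μ] μ[(fun ω => f (a, X ω)) | MeasurableSpace.comap X inferInstance]
        + μ[η | MeasurableSpace.comap X inferInstance] := condExp_add intf2 intη _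
  have h3 : μ[(fun ω => f (a, X ω)) | MeasurableSpace.comap X inferInstance]
      = fun ω => f (a, X ω) :=
    condExp_of_stronglyMeasurable hmX smf intf2
  have h4 : μ[η | MeasurableSpace.comap X inferInstance]
      =ᵐ[μ] μ[ε | MeasurableSpace.comap X inferInstance] := by
    rw [hηdef]
    exact condExp_condExp_of_le hmX2 hm2
  filter_upwards [h1, h2, h4] with ω hω1 hω2 hω4
  rw [hω1, hω2, Pi.add_apply, h3, hω4]
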